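/- Let ε > 0, t ≥ 1, and C ≥ 2·ln(2/ε). Then for all real θ, |cos^t(θ) − ∑_{l=0}^{⌈√(Ct)⌉} p_l cos(lθ)| ≤ ε, where p_l are the Chebyshev expansion coefficients of x^t. -/

import Mathlib

open Finset Real

/-- Coefficients of the Chebyshev expansion of `x^t`: `p t l = P(|X_t| = l)` for a
`t`-step simple random walk on `ℤ` started at the origin. -/
noncomputable def chebCoeff (t l : ℕ) : ℝ :=
  if l = 0 then (if t % 2 = 0 then (t.choose (t / 2) : ℝ) / 2 ^ t else 0)
  else if l ≤ t ∧ l % 2 = t % 2 then (t.choose ((t - l) / 2) : ℝ) / 2 ^ (t - 1) else 0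

lemma chebCoeff_nonneg (t l : ℕ) : 0 ≤ chebCoeff t l := by
  unfold chebCoeff; split_ifs <;> positivity

lemma chebCoeff_eq_zero (t l : ℕ) (h : t < l) : chebCoeff t l = 0 := by
  unfold chebCoeff
  rw [if_neg (by omega), if_neg]
  rintro ⟨h1, -⟩; omega

lemma coshSum (t : ℕ) (z : ℂ) :
    ∑ k ∈ range (t+1), (t.choose k : ℂ) * Complex.cosh (Nat.dist (2*k) t * z)
      = (2 * Complex.cosh z) ^ t := by
  have h2 : (2 : ℂ) * (2 * Complex.cosh z) ^ t
      = ∑ k ∈ range (t+1), (t.choose k : ℂ) * (2 * Complex.cosh (Nat.dist (2*k) t * z)) := by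
    have hp : (2 * Complex.cosh z) ^ t = (Complex.exp z + Complex.exp (-z)) ^ t := by
      rw [Complex.two_cosh]
    have hpow := add_pow (Complex.exp z) (Complex.exp (-z)) t
    have hpow' := add_pow (Complex.exp (-z)) (Complex.exp z) t
    rw [hp, two_mul]
    nth_rewrite 1 [hpow]
    nth_rewrite 1 [add_comm (Complex.exp z)]
    rw [hpow', ← Finset.sum_add_distrib]
    apply Finset.sum_congr rfl
    intro k hk
    rw [Finset.mem_range] at hk
    have hkt : k ≤ t := by omega
    have he : ∀ a b : ℂ, Complex.exp a ^ k * Complex.exp b ^ (t - k)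
        = Complex.exp ((k : ℂ) * a + ((t - k : ℕ) : ℂ) * b) := by
      intro a b
      rw [← Complex.exp_nat_mul, ← Complex.exp_nat_mul, ← Complex.exp_add]
    rw [he, he, Complex.two_cosh]
    rcases le_or_gt t (2 * k) with h | h
    · have hd : ((Nat.dist (2*k) t : ℕ) : ℂ) = (k : ℂ) - ((t - k : ℕ) : ℂ) := by
        have : Nat.dist (2*k) t = 2*k - t := by unfold Nat.dist; omega
        rw [this]
        push_cast [Nat.cast_sub (by omega : t ≤ 2*k), Nat.cast_sub hkt]
        ring
      rw [hd]
      ring_nf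
    · have hd : ((Nat.dist (2*k) t : ℕ) : ℂ) = ((t - k : ℕ) : ℂ) - (k : ℂ) := by
        have : Nat.dist (2*k) t = t - 2*k := by unfold Nat.dist; omega
        rw [this]
        push_cast [Nat.cast_sub (by omega : 2*k ≤ t), Nat.cast_sub hkt]
        ring
      rw [hd]
      ring_nf
  have h3 : (2:ℂ) * ∑ k ∈ range (t+1), (t.choose k : ℂ) * Complex.cosh (Nat.dist (2*k) t * z)
      = 2 * (2 * Complex.cosh z) ^ t := by
    rw [Finset.mul_sum, h2]
    apply Finset.sum_congr rfl
    intro k _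
    ring
  exact mul_left_cancel₀ two_ne_zero h3

lemma keySum (t : ℕ) (ht : 1 ≤ t) (f : ℕ → ℝ) :
    (∑ l ∈ range (t+1), chebCoeff t l * f l) * 2 ^ t
      = ∑ k ∈ range (t+1), (t.choose k : ℝ) * f (Nat.dist (2*k) t) := by
  set D : ℝ := ∑ i ∈ (range t).filter (fun i => (i+1) % 2 = t % 2),
      (t.choose ((t-(i+1))/2) : ℝ) * f (i+1) with hD
  set Cc : ℝ := if t % 2 = 0 then (t.choose (t/2) : ℝ) * f 0 else 0 with hCc
  have h2t : (2:ℝ)^t = 2 * 2^(t-1) := by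
    conv_lhs => rw [show t = (t-1)+1 by omega]
    rw [pow_succ']
  have hL : (∑ l ∈ range (t+1), chebCoeff t l * f l) * 2 ^ t = Cc + 2 * D := by
    have h0 : chebCoeff t 0 * f 0 * 2^t = Cc := by
      rw [hCc]; unfold chebCoeff
      rw [if_pos rfl]
      split_ifs with h
      · field_simp
      · ring
    have hterm : ∀ i ∈ range t, chebCoeff t (i+1) * f (i+1) * 2^t
        = if (i+1) % 2 = t % 2 then 2 * ((t.choose ((t-(i+1))/2) : ℝ) * f (i+1)) else 0 := by
      intro i hi
      rw [Finset.mem_range] at hi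
      unfold chebCoeff
      rw [if_neg (by omega)]
      split_ifs with h1 h2 h2
      · rw [h2t]; field_simp
      · exact absurd h1.2 h2
      · exact absurd ⟨by omega, h2⟩ h1
      · ring
    have hS : ∑ i ∈ range t, chebCoeff t (i+1) * f (i+1) * 2^t = 2 * D := by
      rw [Finset.sum_congr rfl hterm, Finset.sum_ite, Finset.sum_const_zero, add_zero,
        ← Finset.mul_sum, ← hD]
    rw [Finset.sum_mul, Finset.sum_range_succ', h0, hS]
    ring
  have hsplitset1 : ((range (t+1)).filter (fun k => ¬ 2*k < t)).filter (fun k => 2*k = t)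
      = (range (t+1)).filter (fun k => 2*k = t) := by
    ext k; simp only [Finset.mem_filter, Finset.mem_range]; omega
  have hsplitset2 : ((range (t+1)).filter (fun k => ¬ 2*k < t)).filter (fun k => ¬ 2*k = t)
      = (range (t+1)).filter (fun k => t < 2*k) := by
    ext k; simp only [Finset.mem_filter, Finset.mem_range]; omega
  have hR : ∑ k ∈ range (t+1), (t.choose k : ℝ) * f (Nat.dist (2*k) t)
      = D + (Cc + D) := by
    rw [← Finset.sum_filter_add_sum_filter_not (range (t+1)) (fun k => 2*k < t),
      ← Finset.sum_filter_add_sum_filter_not ((range (t+1)).filter (fun k => ¬ 2*k < t))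
        (fun k => 2*k = t), hsplitset1, hsplitset2]
    congr 1
    · -- left half = D
      rw [hD]
      apply Finset.sum_nbij' (i := fun k => t - 2*k - 1) (j := fun i => (t - (i+1))/2)
      · intro k hk
        simp only [Finset.mem_filter, Finset.mem_range] at *
        omega
      · intro i hi
        simp only [Finset.mem_filter, Finset.mem_range] at *
        omega
      · intro k hk
        simp only [Finset.mem_filter, Finset.mem_range] at hk
        omega
      · intro i hi
        simp only [Finset.mem_filter, Finset.mem_range] at hi
        omega
      · intro k hk
        simp only [Finset.mem_filter, Finset.mem_range] at hk
        have e1 : (t - (t - 2*k - 1 + 1))/2 = k := by omega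
        have e2 : t - 2*k - 1 + 1 = Nat.dist (2*k) t := by unfold Nat.dist; omega
        rw [e1, e2]
    congr 1
    · -- center
      have ec : (range (t+1)).filter (fun k => 2*k = t)
          = if t % 2 = 0 then ({t/2} : Finset ℕ) else ∅ := by
        split_ifs with h <;> (ext k; simp only [Finset.mem_filter, Finset.mem_range,
          Finset.mem_singleton, Finset.notMem_empty, iff_false]; omega)
      rw [ec, hCc]
      split_ifs with h
      · rw [Finset.sum_singleton, show 2*(t/2) = t by omega, Nat.dist_self]
      · simp
    · -- right half = D
      rw [hD]
      apply Finset.sum_nbij' (i := fun k => 2*k - t - 1) (j := fun i => (t + (i+1))/2)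
      · intro k hk
        simp only [Finset.mem_filter, Finset.mem_range] at *
        omega
      · intro i hi
        simp only [Finset.mem_filter, Finset.mem_range] at *
        omega
      · intro k hk
        simp only [Finset.mem_filter, Finset.mem_range] at hk
        omega
      · intro i hi
        simp only [Finset.mem_filter, Finset.mem_range] at hi
        omega
      · intro k hk
        simp only [Finset.mem_filter, Finset.mem_range] at hk
        have e1 : (t - (2*k - t - 1 + 1))/2 = t - k := by omega
        have e2 : 2*k - t - 1 + 1 = Nat.dist (2*k) t := by unfold Nat.dist; omega
        rw [e1, e2, Nat.choose_symm (by omega : k ≤ t)]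
  rw [hL, hR]; ring

lemma cheb_cosh_sum (t : ℕ) (ht : 1 ≤ t) (x : ℝ) :
    ∑ l ∈ range (t+1), chebCoeff t l * Real.cosh (l * x) = Real.cosh x ^ t := by
  have hc : ∑ k ∈ range (t+1), (t.choose k : ℝ) * Real.cosh (Nat.dist (2*k) t * x)
      = (2 * Real.cosh x) ^ t := by
    exact_mod_cast coshSum t (x : ℂ)
  have hk := keySum t ht (fun l => Real.cosh (l * x))
  rw [hc, mul_pow, mul_comm ((2:ℝ)^t)] at hk
  exact mul_right_cancel₀ (by positivity) hk

lemma cheb_cos_sum (t : ℕ) (ht : 1 ≤ t) (θ : ℝ) :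
    ∑ l ∈ range (t+1), chebCoeff t l * Real.cos (l * θ) = Real.cos θ ^ t := by
  have h := coshSum t ((θ : ℂ) * Complex.I)
  simp only [← mul_assoc, Complex.cosh_mul_I] at h
  have hc : ∑ k ∈ range (t+1), (t.choose k : ℝ) * Real.cos (Nat.dist (2*k) t * θ)
      = (2 * Real.cos θ) ^ t := by
    exact_mod_cast h
  have hk := keySum t ht (fun l => Real.cos (l * θ))
  rw [hc, mul_pow, mul_comm ((2:ℝ)^t)] at hk
  exact mul_right_cancel₀ (by positivity) hk

theorem truncated_chebyshev_approx (ε : ℝ) (hε : 0 < ε) (t : ℕ) (ht : 1 ≤ t)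
    (C : ℝ) (hC : 2 * Real.log (2 / ε) ≤ C) (θ : ℝ) :
    |Real.cos θ ^ t -
      ∑ l ∈ Finset.range (⌈Real.sqrt (C * t)⌉₊ + 1), chebCoeff t l * Real.cos (l * θ)| ≤ ε := by
  set N : ℕ := ⌈Real.sqrt (C * t)⌉₊ with hN
  have hsum_cos := cheb_cos_sum t ht θ
  rcases le_or_gt t N with hcase | hcase
  · -- truncation includes everything
    have hext : ∑ l ∈ range (t+1), chebCoeff t l * Real.cos (l * θ)
        = ∑ l ∈ range (N+1), chebCoeff t l * Real.cos (l * θ) := by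
      apply Finset.sum_subset (Finset.range_subset_range.mpr (by omega))
      intro l hl hnl
      rw [Finset.mem_range] at hl
      rw [Finset.mem_range, not_lt] at hnl
      rw [chebCoeff_eq_zero t l (by omega), zero_mul]
    rw [← hext, hsum_cos, sub_self, abs_zero]
    exact hε.le
  · -- tail bound
    have htR : (0:ℝ) < t := by exact_mod_cast ht
    have hdiff : Real.cos θ ^ t - ∑ l ∈ range (N+1), chebCoeff t l * Real.cos (l * θ)
        = ∑ l ∈ Finset.Ico (N+1) (t+1), chebCoeff t l * Real.cos (l * θ) := by
      rw [Finset.sum_Ico_eq_sub _ (by omega : N+1 ≤ t+1), hsum_cos]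
    rw [hdiff]
    have habs : |∑ l ∈ Finset.Ico (N+1) (t+1), chebCoeff t l * Real.cos (l * θ)|
        ≤ ∑ l ∈ Finset.Ico (N+1) (t+1), chebCoeff t l := by
      refine (Finset.abs_sum_le_sum_abs _ _).trans (Finset.sum_le_sum ?_)
      intro l hl
      rw [abs_mul, abs_of_nonneg (chebCoeff_nonneg t l)]
      calc chebCoeff t l * |Real.cos (l * θ)| ≤ chebCoeff t l * 1 :=
            mul_le_mul_of_nonneg_left (Real.abs_cos_le_one _) (chebCoeff_nonneg t l)
        _ = chebCoeff t l := mul_one _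
    refine habs.trans ?_
    -- Chernoff bound
    set lam : ℝ := N / t with hlam
    have hlam0 : 0 ≤ lam := by positivity
    have step1 : ∑ l ∈ Finset.Ico (N+1) (t+1), chebCoeff t l
        ≤ ∑ l ∈ Finset.Ico (N+1) (t+1),
            chebCoeff t l * (2 * Real.exp (-(lam * N)) * Real.cosh (l * lam)) := by
      apply Finset.sum_le_sum
      intro l hl
      rw [Finset.mem_Ico] at hl
      have hlN : (N:ℝ) ≤ l := by exact_mod_cast (by omega : N ≤ l)
      have hc2 : Real.exp (l * lam) ≤ 2 * Real.cosh (l * lam) := by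
        rw [Real.cosh_eq]
        have := (Real.exp_pos (-(l * lam))).le
        linarith
      have h1 : (1:ℝ) ≤ Real.exp (-(lam * N)) * Real.exp (l * lam) := by
        rw [← Real.exp_add]
        apply Real.one_le_exp
        nlinarith
      have hbig : (1:ℝ) ≤ 2 * Real.exp (-(lam * N)) * Real.cosh (l * lam) := by
        nlinarith [Real.exp_pos (-(lam * N))]
      calc chebCoeff t l = chebCoeff t l * 1 := (mul_one _).symm
        _ ≤ _ := mul_le_mul_of_nonneg_left hbig (chebCoeff_nonneg t l)
    have step2 : ∑ l ∈ Finset.Ico (N+1) (t+1),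
            chebCoeff t l * (2 * Real.exp (-(lam * N)) * Real.cosh (l * lam))
        ≤ 2 * Real.exp (-(lam * N)) *
            ∑ l ∈ range (t+1), chebCoeff t l * Real.cosh (l * lam) := by
      rw [Finset.mul_sum]
      have hsub : Finset.Ico (N+1) (t+1) ⊆ range (t+1) := by
        intro l hl
        rw [Finset.mem_Ico] at hl
        rw [Finset.mem_range]
        omega
      calc ∑ l ∈ Finset.Ico (N+1) (t+1),
              chebCoeff t l * (2 * Real.exp (-(lam * N)) * Real.cosh (l * lam))
          = ∑ l ∈ Finset.Ico (N+1) (t+1),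
              2 * Real.exp (-(lam * N)) * (chebCoeff t l * Real.cosh (l * lam)) := by
            apply Finset.sum_congr rfl; intro l _; ring
        _ ≤ ∑ l ∈ range (t+1),
              2 * Real.exp (-(lam * N)) * (chebCoeff t l * Real.cosh (l * lam)) := by
            apply Finset.sum_le_sum_of_subset_of_nonneg hsub
            intro l _ _
            have := chebCoeff_nonneg t l
            have := (Real.cosh_pos (x := l * lam)).le
            positivity
    have step3 : ∑ l ∈ range (t+1), chebCoeff t l * Real.cosh (l * lam)
        = Real.cosh lam ^ t := cheb_cosh_sum t ht lam
    have step4 : Real.cosh lam ^ t ≤ Real.exp (t * (lam^2/2)) := by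
      rw [Real.exp_nat_mul]
      exact pow_le_pow_left₀ (Real.cosh_pos (x := lam)).le (Real.cosh_le_exp_half_sq lam) t
    have hN2 : C * t ≤ (N:ℝ)^2 := by
      rcases le_or_gt 0 (C * t) with h | h
      · have h1 : Real.sqrt (C * t) ≤ (N:ℝ) := Nat.le_ceil _
        nlinarith [Real.sq_sqrt h, Real.sqrt_nonneg (C * t)]
      · nlinarith [sq_nonneg (N:ℝ)]
    have step5 : -(lam * N) + t * (lam^2/2) = -((N:ℝ)^2/(2*t)) := by
      rw [hlam]
      field_simp
      ring
    have step6 : -((N:ℝ)^2/(2*t)) ≤ -(C/2) := by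
      rw [neg_le_neg_iff, div_le_div_iff₀ (by positivity) (by positivity)]
      nlinarith
    have step7 : Real.exp (-(C/2)) ≤ ε / 2 := by
      have h1 : -(C/2) ≤ -Real.log (2/ε) := by linarith
      have h2 : Real.exp (-Real.log (2/ε)) = ε / 2 := by
        rw [Real.exp_neg, Real.exp_log (by positivity)]
        rw [inv_div]
      calc Real.exp (-(C/2)) ≤ Real.exp (-Real.log (2/ε)) := Real.exp_le_exp.mpr h1
        _ = ε / 2 := h2
    calc ∑ l ∈ Finset.Ico (N+1) (t+1), chebCoeff t l
        ≤ 2 * Real.exp (-(lam * N)) * ∑ l ∈ range (t+1), chebCoeff t l * Real.cosh (l * lam) :=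
          step1.trans step2
      _ = 2 * Real.exp (-(lam * N)) * Real.cosh lam ^ t := by rw [step3]
      _ ≤ 2 * Real.exp (-(lam * N)) * Real.exp (t * (lam^2/2)) := by
          apply mul_le_mul_of_nonneg_left step4
          positivity
      _ = 2 * Real.exp (-(lam * N) + t * (lam^2/2)) := by rw [Real.exp_add]; ring
      _ = 2 * Real.exp (-((N:ℝ)^2/(2*t))) := by rw [step5]
      _ ≤ 2 * Real.exp (-(C/2)) := by
          have := Real.exp_le_exp.mpr step6
          linarith
      _ ≤ 2 * (ε/2) := by linarith
      _ = ε := by ring
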